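/- arXiv:0801.4815 — 2 statements merged into one kernel-verified Lean document; each statement's English description precedes it below -/
import Mathlib

section
/- Let v = (v₀, v₁, v₂) with v₀, v₁, v₂ > 0, and let N_v = (0, −v₀+v₁, −v₀+v₂, v₀) ∈ ℝ⁴. Then with n₀=(1,0,0,1), n₁=(0,1,0,1), n₂=(0,0,1,1), n₃=(−1,0,0,1), n₄=(0,−1,0,1), n₅=(0,0,−1,1), the Euclidean inner products satisfy (n₀/v₀)·N_v = (n₁/v₁)·N_v = (n₂/v₂)·N_v = (n₃/v₀)·N_v = 1, and moreover (n₄/v₁)·N_v = 1 and (n₅/v₂)·N_v = 1 hold if and only if v₀ = v₁ and v₀ = v₂ respectively. Hence the six scaled points nᵢ/v_{c(i)} are coplanar (lie in {x : x·N_v = 1}) if and only if v₀ = v₁ = v₂. -/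
open Finset

/-- The Euclidean dot product on `ℝ⁴`. -/
def dot4 (x y : Fin 4 → ℝ) : ℝ := ∑ i : Fin 4, x i * y i

def n0 : Fin 4 → ℝ := ![1, 0, 0, 1]
def n1 : Fin 4 → ℝ := ![0, 1, 0, 1]
def n2 : Fin 4 → ℝ := ![0, 0, 1, 1]
def n3 : Fin 4 → ℝ := ![-1, 0, 0, 1]
def n4 : Fin 4 → ℝ := ![0, -1, 0, 1]
def n5 : Fin 4 → ℝ := ![0, 0, -1, 1]

/-- With `N_v = (0, −v₀+v₁, −v₀+v₂, v₀)`, the scaled vertices `n₀/v₀, n₁/v₁, n₂/v₂,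
n₃/v₀` satisfy `x · N_v = 1`; the conditions `(n₄/v₁) · N_v = 1` and
`(n₅/v₂) · N_v = 1` hold iff `v₀ = v₁` and `v₀ = v₂` respectively. Hence all six
scaled points are coplanar iff `v₀ = v₁ = v₂`. -/
theorem stmt9 (v0 v1 v2 : ℝ) (h0 : 0 < v0) (h1 : 0 < v1) (h2 : 0 < v2) :
    let Nv : Fin 4 → ℝ := ![0, -v0 + v1, -v0 + v2, v0]
    dot4 (v0⁻¹ • n0) Nv = 1 ∧ dot4 (v1⁻¹ • n1) Nv = 1 ∧
    dot4 (v2⁻¹ • n2) Nv = 1 ∧ dot4 (v0⁻¹ • n3) Nv = 1 ∧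
    (dot4 (v1⁻¹ • n4) Nv = 1 ↔ v0 = v1) ∧
    (dot4 (v2⁻¹ • n5) Nv = 1 ↔ v0 = v2) ∧
    ((dot4 (v0⁻¹ • n0) Nv = 1 ∧ dot4 (v1⁻¹ • n1) Nv = 1 ∧ dot4 (v2⁻¹ • n2) Nv = 1 ∧
      dot4 (v0⁻¹ • n3) Nv = 1 ∧ dot4 (v1⁻¹ • n4) Nv = 1 ∧ dot4 (v2⁻¹ • n5) Nv = 1) ↔
      (v0 = v1 ∧ v0 = v2)) := by
  intro Nv
  have H0 : v0 ≠ 0 := h0.ne'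
  have H1 : v1 ≠ 0 := h1.ne'
  have H2 : v2 ≠ 0 := h2.ne'
  simp only [dot4, Nv, n0, n1, n2, n3, n4, n5, Fin.sum_univ_four, Pi.smul_apply,
    Matrix.cons_val_zero, Matrix.cons_val_one, Matrix.head_cons, Matrix.cons_val_two,
    Matrix.tail_cons, Matrix.cons_val_three, smul_eq_mul]
  constructor
  · field_simp; ring
  refine ⟨by (field_simp; ring), by (field_simp; ring), by (field_simp; ring), ?_, ?_, ?_⟩
  · constructor
    · intro h; field_simp at h; linarith
    · intro h; subst h; field_simp; ring
  · constructor
    · intro h; field_simp at h; linarith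
    · intro h; subst h; field_simp; ring
  · constructor
    · rintro ⟨-, -, -, -, h4, h5⟩
      field_simp at h4 h5
      exact ⟨by linarith, by linarith⟩
    · rintro ⟨e1, e2⟩
      subst e1; subst e2
      refine ⟨by (field_simp; ring), by (field_simp; ring), by (field_simp; ring),
        by (field_simp; ring), by (field_simp; ring), by (field_simp; ring)⟩
end

section
/- Let w be a finite word in the letters {L, R} of length n. Consider the cusp triangulation strip built from w: an infinite periodic strip of Euclidean triangles in which each letter L contributes a triangle with a side on the bottom edge and apex on top, and each R contributes a triangle with a side on the top edge and apex on the bottom. Then the order of the vertex of the strip complex corresponding to a maximal block of k consecutive equal letters in the cyclic word w (with w not a power of a single letter) equals 2k + 4. -/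
open Finset

namespace StripComplex

/-- Signed count of `L`'s (letters `true`) among positions `0 ≤ j < i` (negated count
over `i ≤ j < 0` when `i < 0`): the horizontal coordinate of bottom-line vertices. -/
noncomputable def bot (w : ℤ → Bool) (i : ℤ) : ℤ :=
  (∑ j ∈ Finset.Ico (0 : ℤ) i, (if w j then 1 else 0)) -
    (∑ j ∈ Finset.Ico i (0 : ℤ), (if w j then 1 else 0))

/-- Signed count of `R`'s (letters `false`) among positions `0 ≤ j < i`:
the horizontal coordinate of top-line vertices. -/
noncomputable def top (w : ℤ → Bool) (i : ℤ) : ℤ :=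
  (∑ j ∈ Finset.Ico (0 : ℤ) i, (if w j then 0 else 1)) -
    (∑ j ∈ Finset.Ico i (0 : ℤ), (if w j then 0 else 1))

/-- The vertex set of the triangle of the planar triangulation associated to letter
position `i` in strip `s` (the strip between the horizontal lines `y = s` and
`y = s + 1`; strips of odd index are mirror images of the base strip).  A letter
`L = true` contributes a triangle with a side on the `L`-base line and apex on the
other line; vice versa for `R = false`. -/
def triVerts (w : ℤ → Bool) (s i : ℤ) : Set (ℤ × ℤ) :=
  let bL : ℤ := if Even s then s else s + 1
  let bR : ℤ := if Even s then s + 1 else s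
  if w i then {(bot w i, bL), (bot w i + 1, bL), (top w i, bR)}
  else {(top w i, bR), (top w i + 1, bR), (bot w i, bL)}

/-- The order (degree) of a vertex `v`: the number of triangles of the planar
triangulation incident to `v`. -/
noncomputable def vertexOrder (w : ℤ → Bool) (v : ℤ × ℤ) : ℕ :=
  Set.ncard {p : ℤ × ℤ | v ∈ triVerts w p.1 p.2}

lemma top_eq_bot_not (w : ℤ → Bool) (i : ℤ) : top w i = bot (fun j => !w j) i := by
  unfold top bot
  congr 1 <;> exact Finset.sum_congr rfl fun j _ => by cases hwj : w j <;> simp [hwj]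

lemma bot_succ (w : ℤ → Bool) (j : ℤ) :
    bot w (j + 1) = bot w j + (if w j then 1 else 0) := by
  unfold bot
  have h3 : Finset.Ico j (j+1) = {j} := by ext x; simp [Finset.mem_Ico]; omega
  rcases le_or_gt 0 j with h | h
  · have h4 : Finset.Ico (0:ℤ) j ∪ Finset.Ico j (j+1) = Finset.Ico (0:ℤ) (j+1) :=
      Finset.Ico_union_Ico_eq_Ico (by omega) (by omega)
    have h5 : Disjoint (Finset.Ico (0:ℤ) j) (Finset.Ico j (j+1)) :=
      Finset.Ico_disjoint_Ico_consecutive 0 j (j+1)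
    rw [Finset.Ico_eq_empty (by omega : ¬ (j:ℤ) < 0),
      Finset.Ico_eq_empty (by omega : ¬ (j:ℤ) + 1 < 0), ← h4,
      Finset.sum_union h5, h3]
    simp only [Finset.sum_singleton, Finset.sum_empty]
    ring
  · have h1 : Finset.Ico (0:ℤ) (j+1) = ∅ := Finset.Ico_eq_empty (by omega)
    have h2 : Finset.Ico (0:ℤ) j = ∅ := Finset.Ico_eq_empty (by omega)
    have h4 : Finset.Ico j (j+1) ∪ Finset.Ico (j+1) 0 = Finset.Ico j (0:ℤ) :=
      Finset.Ico_union_Ico_eq_Ico (by omega) (by omega)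
    have h5 : Disjoint (Finset.Ico j (j+1)) (Finset.Ico (j+1) (0:ℤ)) :=
      Finset.Ico_disjoint_Ico_consecutive j (j+1) 0
    rw [h1, h2, ← h4, Finset.sum_union h5, h3]
    simp only [Finset.sum_singleton, Finset.sum_empty]
    ring

lemma bot_add_nat (w : ℤ → Bool) (a : ℤ) (m : ℕ) : bot w a ≤ bot w (a + m) := by
  induction m with
  | zero => simp
  | succ m ih =>
    have h := bot_succ w (a + m)
    have he : (a : ℤ) + ((m : ℕ) + 1 : ℕ) = (a + m) + 1 := by push_cast; ring
    rw [he, h]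
    split <;> omega

lemma bot_le_bot (w : ℤ → Bool) {a b : ℤ} (h : a ≤ b) : bot w a ≤ bot w b := by
  obtain ⟨m, rfl⟩ : ∃ m : ℕ, b = a + m := ⟨(b - a).toNat, by omega⟩
  exact bot_add_nat w a m

lemma bot_block (w : ℤ → Bool) (i : ℤ) (k : ℕ)
    (hblock : ∀ j : ℤ, i ≤ j → j < i + k → w j = false) :
    ∀ m : ℕ, m ≤ k → bot w (i + m) = bot w i := by
  intro m
  induction m with
  | zero => simp
  | succ m ih =>
    intro hm
    have hw : w (i + m) = false := hblock _ (by omega) (by push_cast; omega)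
    have he : (i : ℤ) + ((m : ℕ) + 1 : ℕ) = (i + m) + 1 := by push_cast; ring
    rw [he, bot_succ, hw, ih (by omega)]
    simp

lemma cond_iff (w : ℤ → Bool) (i : ℤ) (k : ℕ) (hk : 0 < k)
    (hblock : ∀ j : ℤ, i ≤ j → j < i + k → w j = false)
    (hmaxl : w (i - 1) = true) (hmaxr : w (i + k) = true) (j : ℤ) :
    ((w j = true ∧ (bot w i = bot w j ∨ bot w i = bot w j + 1)) ∨
      (w j = false ∧ bot w i = bot w j)) ↔ (i - 1 ≤ j ∧ j ≤ i + k) := by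
  have hb2 : ∀ j : ℤ, i ≤ j → j ≤ i + k → bot w j = bot w i := by
    intro j h1 h2
    obtain ⟨m, rfl⟩ : ∃ m : ℕ, j = i + m := ⟨(j - i).toNat, by omega⟩
    exact bot_block w i k hblock m (by omega)
  have hb1 : bot w i = bot w (i - 1) + 1 := by
    have h := bot_succ w (i - 1)
    rw [show i - 1 + 1 = i by ring, hmaxl] at h
    simpa using h
  have hb3 : bot w (i + k + 1) = bot w i + 1 := by
    have := bot_succ w (i + k)
    rw [hmaxr, hb2 (i + k) (by omega) le_rfl] at this
    simpa using this
  constructor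
  · intro h
    constructor
    · by_contra hc
      push_neg at hc
      have hj1 : j + 1 ≤ i - 1 := by omega
      have hm1 : bot w (j + 1) ≤ bot w (i - 1) := bot_le_bot w hj1
      have hm2 : bot w j ≤ bot w (i - 1) := bot_le_bot w (by omega)
      rcases h with ⟨hw, h | h⟩ | ⟨hw, h⟩
      · omega
      · have := bot_succ w j
        rw [hw] at this
        simp at this
        omega
      · omega
    · by_contra hc
      push_neg at hc
      have hm : bot w (i + k + 1) ≤ bot w j := bot_le_bot w (by omega)
      rcases h with ⟨hw, h | h⟩ | ⟨hw, h⟩ <;> omega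
  · rintro ⟨h1, h2⟩
    by_cases hj1 : j = i - 1
    · subst hj1
      exact Or.inl ⟨hmaxl, Or.inr hb1⟩
    by_cases hj2 : j = i + k
    · subst hj2
      exact Or.inl ⟨hmaxr, Or.inl (hb2 _ (by omega) le_rfl).symm⟩
    · exact Or.inr ⟨hblock j (by omega) (by omega), (hb2 j (by omega) (by omega)).symm⟩

lemma mem_triVerts_zero (w : ℤ → Bool) (s j x : ℤ) :
    ((x, (0:ℤ)) ∈ triVerts w s j) ↔
      ((s = 0 ∨ s = -1) ∧
        ((w j = true ∧ (x = bot w j ∨ x = bot w j + 1)) ∨ (w j = false ∧ x = bot w j))) := by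
  have hbL : ((0:ℤ) = (if Even s then s else s + 1)) ↔ (s = 0 ∨ s = -1) := by
    rcases Int.even_or_odd s with h | h
    · rw [if_pos h]; rw [Int.even_iff] at h; omega
    · rw [if_neg (Int.not_even_iff_odd.mpr h)]; rw [Int.odd_iff] at h; omega
  have hbR : ((0:ℤ) = (if Even s then s + 1 else s)) ↔ False := by
    rcases Int.even_or_odd s with h | h
    · rw [if_pos h]; rw [Int.even_iff] at h; simp only [iff_false]; omega
    · rw [if_neg (Int.not_even_iff_odd.mpr h)]; rw [Int.odd_iff] at h
      simp only [iff_false]; omega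
  by_cases hw : w j
  · simp [triVerts, hw, Prod.ext_iff, hbL, hbR]
    tauto
  · simp only [Bool.not_eq_true] at hw
    simp [triVerts, hw, Prod.ext_iff, hbL, hbR]
    tauto

lemma mem_triVerts_one (w : ℤ → Bool) (s j x : ℤ) :
    ((x, (1:ℤ)) ∈ triVerts w s j) ↔
      ((s = 0 ∨ s = 1) ∧
        ((w j = false ∧ (x = top w j ∨ x = top w j + 1)) ∨ (w j = true ∧ x = top w j))) := by
  have hbR : ((1:ℤ) = (if Even s then s + 1 else s)) ↔ (s = 0 ∨ s = 1) := by
    rcases Int.even_or_odd s with h | h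
    · rw [if_pos h]; rw [Int.even_iff] at h; omega
    · rw [if_neg (Int.not_even_iff_odd.mpr h)]; rw [Int.odd_iff] at h; omega
  have hbL : ((1:ℤ) = (if Even s then s else s + 1)) ↔ False := by
    rcases Int.even_or_odd s with h | h
    · rw [if_pos h]; rw [Int.even_iff] at h; simp only [iff_false]; omega
    · rw [if_neg (Int.not_even_iff_odd.mpr h)]; rw [Int.odd_iff] at h
      simp only [iff_false]; omega
  by_cases hw : w j
  · simp [triVerts, hw, Prod.ext_iff, hbL, hbR]
    tauto
  · simp only [Bool.not_eq_true] at hw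
    simp [triVerts, hw, Prod.ext_iff, hbL, hbR]
    tauto

/-- For a cyclic word`w` of period `n`, not a power of a single letter, the order of
the vertex of the strip complex corresponding to a maximal block of `k` consecutive
equal letters equals `2k + 4`. -/
theorem stmt14 (n : ℕ) (hn : 0 < n) (w : ℤ → Bool)
    (hper : ∀ i : ℤ, w (i + n) = w i)
    (hnotconst : ∃ i j : ℤ, w i ≠ w j)
    (i : ℤ) (k : ℕ) (hk : 0 < k) (l : Bool)
    (hblock : ∀ j : ℤ, i ≤ j → j < i + k → w j = l)
    (hmaxl : w (i - 1) ≠ l) (hmaxr : w (i + k) ≠ l) :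
    vertexOrder w (if l then (top w i, 1) else (bot w i, 0)) = 2 * k + 4 := by
  cases l with
  | false =>
    have hmaxl' : w (i - 1) = true := by
      cases h : w (i - 1)
      · exact absurd h hmaxl
      · rfl
    have hmaxr' : w (i + k) = true := by
      cases h : w (i + k)
      · exact absurd h hmaxr
      · rfl
    simp only [Bool.false_eq_true, if_false]
    rw [vertexOrder]
    have hset : {p : ℤ × ℤ | (bot w i, (0:ℤ)) ∈ triVerts w p.1 p.2}
        = ↑((({0, -1} : Finset ℤ)) ×ˢ Finset.Icc (i - 1) (i + k)) := by
      ext ⟨s, j⟩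
      simp only [Set.mem_setOf_eq, mem_triVerts_zero, Finset.coe_product, Set.mem_prod,
        Finset.mem_coe, Finset.mem_insert, Finset.mem_singleton, Finset.mem_Icc]
      rw [cond_iff w i k hk hblock hmaxl' hmaxr' j]
    rw [hset, Set.ncard_coe_finset, Finset.card_product, Int.card_Icc]
    have h2 : (({0, -1} : Finset ℤ)).card = 2 := by decide
    rw [h2]
    omega
  | true =>
    set w' : ℤ → Bool := fun j => !w j with hw'
    have hblock' : ∀ j : ℤ, i ≤ j → j < i + k → w' j = false := by
      intro j h1 h2
      simp [hw', hblock j h1 h2]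
    have hmaxl' : w' (i - 1) = true := by
      cases h : w (i - 1)
      · simp [hw', h]
      · exact absurd h hmaxl
    have hmaxr' : w' (i + k) = true := by
      cases h : w (i + k)
      · simp [hw', h]
      · exact absurd h hmaxr
    have ht : ∀ x : ℤ, top w x = bot w' x := fun x => top_eq_bot_not w x
    have hwt : ∀ j : ℤ, (w j = false) ↔ (w' j = true) := by
      intro j; simp [hw']
    have hwf : ∀ j : ℤ, (w j = true) ↔ (w' j = false) := by
      intro j; simp [hw']
    simp only [if_true]
    rw [vertexOrder]
    have hset : {p : ℤ × ℤ | (top w i, (1:ℤ)) ∈ triVerts w p.1 p.2}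
        = ↑((({0, 1} : Finset ℤ)) ×ˢ Finset.Icc (i - 1) (i + k)) := by
      ext ⟨s, j⟩
      simp only [Set.mem_setOf_eq, mem_triVerts_one, ht, hwt, hwf, Finset.coe_product,
        Set.mem_prod, Finset.mem_coe, Finset.mem_insert, Finset.mem_singleton, Finset.mem_Icc]
      rw [cond_iff w' i k hk hblock' hmaxl' hmaxr' j]
    rw [hset, Set.ncard_coe_finset, Finset.card_product, Int.card_Icc]
    have h2 : (({0, 1} : Finset ℤ)).card = 2 := by decide
    rw [h2]
    omega


end StripComplex
end
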